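/- Let Δ be a forest with facet ideal I(Δ), F a facet of Δ, f the monomial corresponding to F, and J the ideal generated by the monomials of the other facets. Then the simplicial complex whose facet ideal is the colon ideal J : f is again a forest; its facets are among the sets G \ F for facets G ≠ F of Δ. -/

import Mathlib

variable {V : Type} [DecidableEq V]

/-- A simplicial complex presented by its (finite) set of facets: the facets are
nonempty and form an antichain under inclusion (facets are the maximal faces). -/
def IsComplex (Δ : Finset (Finset V)) : Prop :=
  (∀ F ∈ Δ, F.Nonempty) ∧ ∀ F ∈ Δ, ∀ G ∈ Δ, F ⊆ G → F = G

/-- `c 0, c 1, …, c n` is a chain of facets of `Δ`: consecutive members intersect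
nontrivially. -/
def IsChainSeq (Δ : Finset (Finset V)) (c : ℕ → Finset V) (n : ℕ) : Prop :=
  (∀ i ≤ n, c i ∈ Δ) ∧ ∀ i < n, (c i ∩ c (i + 1)).Nonempty

/-- A proper chain: a chain with `dim (c i ∩ c (i+1)) = dim (c (i+1)) - 1` for all `i`
(expressed via cardinalities), going from a facet of larger (or equal) dimension to one of
smaller dimension. -/
def IsProperChainSeq (Δ : Finset (Finset V)) (c : ℕ → Finset V) (n : ℕ) : Prop :=
  IsChainSeq Δ c n ∧ (c n).card ≤ (c 0).card ∧
    ∀ i < n, (c i ∩ c (i + 1)).card + 1 = (c (i + 1)).card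

/-- An irredundant chain: no proper subsequence (with the same endpoints) is again a chain. -/
def IsIrredChainSeq (Δ : Finset (Finset V)) (c : ℕ → Finset V) (n : ℕ) : Prop :=
  IsChainSeq Δ c n ∧ ∀ m < n, ∀ g : ℕ → ℕ, StrictMonoOn g (Set.Iic m) →
    g 0 = 0 → g m = n → ¬ IsChainSeq Δ (c ∘ g) m

/-- An irredundant proper chain: no proper subsequence (with the same endpoints) is again a
proper chain. -/
def IsIrredProperChainSeq (Δ : Finset (Finset V)) (c : ℕ → Finset V) (n : ℕ) : Prop :=
  IsProperChainSeq Δ c n ∧ ∀ m < n, ∀ g : ℕ → ℕ, StrictMonoOn g (Set.Iic m) →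
    g 0 = 0 → g m = n → ¬ IsProperChainSeq Δ (c ∘ g) m

/-- `F` is a leaf of the complex with facet set `Δ`. -/
def IsLeaf (Δ : Finset (Finset V)) (F : Finset V) : Prop :=
  F ∈ Δ ∧ (Δ = {F} ∨ ∃ G ∈ Δ, G ≠ F ∧ ∀ H ∈ Δ, H ≠ F → F ∩ H ⊆ F ∩ G)

/-- The complex is connected: any two facets are joined by a chain. -/
def ComplexConnected (Δ : Finset (Finset V)) : Prop :=
  ∀ F ∈ Δ, ∀ G ∈ Δ, ∃ n c, IsChainSeq Δ c n ∧ c 0 = F ∧ c n = G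

/-- Every nonempty subcomplex has a leaf. -/
def HasLeafProp (Δ : Finset (Finset V)) : Prop :=
  ∀ Γ ⊆ Δ, Γ.Nonempty → ∃ F, IsLeaf Γ F

/-- A tree: a (nonempty) connected complex all of whose nonempty subcomplexes have a leaf. -/
def IsTree (Δ : Finset (Finset V)) : Prop :=
  Δ.Nonempty ∧ ComplexConnected Δ ∧ HasLeafProp Δ

/-- A forest: every connected component is a tree; equivalently every nonempty subcomplex
has a leaf. -/
def IsForest (Δ : Finset (Finset V)) : Prop := HasLeafProp Δ

/-- Pure of dimension `d`: all facets have `d + 1` vertices. -/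
def IsPure (Δ : Finset (Finset V)) (d : ℕ) : Prop := ∀ F ∈ Δ, F.card = d + 1

/-- Connected in codimension 1: any two facets (ordered by decreasing dimension) are
joined by a proper chain. -/
def ConnCodim1 (Δ : Finset (Finset V)) : Prop :=
  ∀ F ∈ Δ, ∀ G ∈ Δ, G.card ≤ F.card →
    ∃ n c, IsProperChainSeq Δ c n ∧ c 0 = F ∧ c n = G

/-- The facets of the link of a face `G` of `Δ`. -/
def LinkFacets (Δ : Finset (Finset V)) (G : Finset V) : Finset (Finset V) :=
  (Δ.filter fun F => G ⊆ F).image fun F => F \ G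


section Helpers
open MvPolynomial

/-- exponent vector of a squarefree monomial -/
noncomputable def eG (G : Finset V) : V →₀ ℕ := ∑ v ∈ G, Finsupp.single v 1

lemma eG_apply (G : Finset V) (v : V) : eG G v = if v ∈ G then 1 else 0 := by
  classical
  rw [eG, Finset.sum_apply']
  simp [Finsupp.single_apply]

lemma prod_X_eq (K : Type) [CommSemiring K] (G : Finset V) :
    (∏ v ∈ G, (X v : MvPolynomial V K)) = monomial (eG G) 1 := by
  classical
  induction G using Finset.induction with
  | empty => simp [eG]
  | insert a s h ih =>
      rw [Finset.prod_insert h, ih, ← pow_one (X _), X_pow_eq_monomial,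
        monomial_mul, one_mul]
      congr 1
      rw [eG, eG, Finset.sum_insert h]

lemma eG_le_iff (G : Finset V) (a : V →₀ ℕ) : eG G ≤ a ↔ ∀ v ∈ G, 1 ≤ a v := by
  rw [Finsupp.le_def]
  constructor
  · intro h v hv; have := h v; rwa [eG_apply, if_pos hv] at this
  · intro h v; rw [eG_apply]; split
    · exact h v ‹_›
    · exact Nat.zero_le _

lemma eG_le_eG (G E : Finset V) : eG G ≤ eG E ↔ G ⊆ E := by
  rw [eG_le_iff]
  constructor
  · intro h v hv
    by_contra hvE
    have := h v hv
    rw [eG_apply, if_neg hvE] at this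
    omega
  · intro h v hv
    rw [eG_apply, if_pos (h hv)]

lemma eG_colon (G F : Finset V) (a : V →₀ ℕ) :
    eG G ≤ a + eG F ↔ eG (G \ F) ≤ a := by
  rw [eG_le_iff, eG_le_iff]
  constructor
  · intro h v hv
    rw [Finset.mem_sdiff] at hv
    have := h v hv.1
    rwa [Finsupp.add_apply, eG_apply, if_neg hv.2, add_zero] at this
  · intro h v hv
    rw [Finsupp.add_apply, eG_apply]
    by_cases hvF : v ∈ F
    · rw [if_pos hvF]; omega
    · have := h v (Finset.mem_sdiff.2 ⟨hv, hvF⟩)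
      rw [if_neg hvF]; omega

lemma mem_span_iff (K : Type) [Field K] (S : Set (Finset V)) (p : MvPolynomial V K) :
    p ∈ Ideal.span ((fun G => ∏ v ∈ G, (X v : MvPolynomial V K)) '' S) ↔
      ∀ a ∈ p.support, ∃ G ∈ S, eG G ≤ a := by
  have himg : (fun G => ∏ v ∈ G, (X v : MvPolynomial V K)) '' S
      = (fun s => monomial s (1 : K)) '' (eG '' S) := by
    rw [Set.image_image]
    exact Set.image_congr fun G _ => prod_X_eq K G
  rw [himg, mem_ideal_span_monomial_image]
  constructor
  · intro h a ha
    obtain ⟨s, hs, hle⟩ := h a ha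
    obtain ⟨G, hG, rfl⟩ := hs
    exact ⟨G, hG, hle⟩
  · intro h a ha
    obtain ⟨G, hG, hle⟩ := h a ha
    exact ⟨eG G, ⟨G, hG, rfl⟩, hle⟩

lemma support_mul_mono (K : Type) [Field K] (p : MvPolynomial V K) (d : V →₀ ℕ) :
    (p * monomial d 1).support = p.support.map (addRightEmbedding d) :=
  AddMonoidAlgebra.support_coeff_mul_single p _ (by simp) _

lemma mem_colon_iff (K : Type) [Field K] (Δ : Finset (Finset V)) (F : Finset V)
    (p : MvPolynomial V K) :
    p ∈ Submodule.colon
          (Ideal.span ((fun G => ∏ v ∈ G, (X v : MvPolynomial V K)) '' ↑(Δ.erase F)))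
          (Ideal.span {∏ v ∈ F, (X v : MvPolynomial V K)}) ↔
      ∀ a ∈ p.support, ∃ G ∈ Δ.erase F, eG (G \ F) ≤ a := by
  rw [Ideal.mem_colon_span_singleton, prod_X_eq, mem_span_iff]
  constructor
  · intro h a ha
    have hmem : a + eG F ∈ (p * monomial (eG F) (1 : K)).support := by
      rw [support_mul_mono]
      exact Finset.mem_map.2 ⟨a, ha, rfl⟩
    obtain ⟨G, hG, hle⟩ := h _ hmem
    exact ⟨G, hG, (eG_colon G F a).1 hle⟩
  · intro h a ha
    rw [support_mul_mono] at ha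
    obtain ⟨b, hb, rfl⟩ := Finset.mem_map.1 ha
    obtain ⟨G, hG, hle⟩ := h b hb
    exact ⟨G, hG, (eG_colon G F b).2 hle⟩

end Helpers

open MvPolynomial in
/-- Lemma 2.9. Let `Δ` be a forest with facet ideal `I(Δ)`, `F` a facet
with corresponding monomial `f = ∏_{v ∈ F} x_v`, and `J` the ideal generated by the
monomials of the other facets. Any simplicial complex `Δ₂` whose facet ideal equals the
colon ideal `J : f` is again a forest, and its facets are among the sets `G \ F` for
facets `G ≠ F` of `Δ`. -/
theorem stmt12 {V : Type} [DecidableEq V] (K : Type) [Field K]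
    (Δ : Finset (Finset V)) (hΔ : IsComplex Δ) (hforest : IsForest Δ)
    (F : Finset V) (hF : F ∈ Δ)
    (Δ₂ : Finset (Finset V)) (hΔ₂ : IsComplex Δ₂)
    (h : Ideal.span ((fun G => ∏ v ∈ G, (MvPolynomial.X v : MvPolynomial V K)) '' ↑Δ₂)
        = Submodule.colon
            (Ideal.span ((fun G => ∏ v ∈ G, (MvPolynomial.X v : MvPolynomial V K)) ''
              ↑(Δ.erase F)))
            (Ideal.span {∏ v ∈ F, (MvPolynomial.X v : MvPolynomial V K)})) :
    IsForest Δ₂ ∧ ∀ E ∈ Δ₂, ∃ G ∈ Δ, G ≠ F ∧ E = G \ F := by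
  classical
  have key : ∀ E ∈ Δ₂, ∃ G ∈ Δ, G ≠ F ∧ E = G \ F := by
    intro E hE
    have h1 : (monomial (eG E) (1 : K)) ∈
        Ideal.span ((fun G => ∏ v ∈ G, (X v : MvPolynomial V K)) '' ↑Δ₂) :=
      Ideal.subset_span ⟨E, Finset.mem_coe.2 hE, prod_X_eq K E⟩
    rw [h, mem_colon_iff] at h1
    obtain ⟨G, hG, hle⟩ := h1 (eG E) (by simp [support_monomial])
    have hGF : G \ F ⊆ E := (eG_le_eG _ _).1 hle
    have h3 : (monomial (eG (G \ F)) (1 : K)) ∈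
        Ideal.span ((fun G => ∏ v ∈ G, (X v : MvPolynomial V K)) '' ↑Δ₂) := by
      rw [h, mem_colon_iff]
      intro a ha
      simp only [support_monomial, one_ne_zero, if_false, Finset.mem_singleton] at ha
      subst ha
      exact ⟨G, hG, le_refl _⟩
    rw [mem_span_iff] at h3
    obtain ⟨E', hE', hle'⟩ := h3 (eG (G \ F)) (by simp [support_monomial])
    have hE'sub : E' ⊆ G \ F := (eG_le_eG _ _).1 hle'
    have hE'E : E' = E := hΔ₂.2 E' (Finset.mem_coe.1 hE') E hE (hE'sub.trans hGF)
    exact ⟨G, Finset.mem_of_mem_erase hG, Finset.ne_of_mem_erase hG,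
      subset_antisymm (hE'E ▸ hE'sub) hGF⟩
  refine ⟨?_, key⟩
  intro Γ hΓ hne
  have key' : ∀ E ∈ Γ, ∃ G, G ∈ Δ ∧ G ≠ F ∧ E = G \ F := by
    intro E hE
    obtain ⟨G, h1, h2, h3⟩ := key E (hΓ hE)
    exact ⟨G, h1, h2, h3⟩
  choose! g hgΔ hgF hgE using key'
  have hinj : ∀ D1 ∈ Γ, ∀ D2 ∈ Γ, g D1 = g D2 → D1 = D2 := by
    intro D1 hD1 D2 hD2 hgg
    rw [hgE D1 hD1, hgE D2 hD2, hgg]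
  have hΓ'Δ : Γ.image g ⊆ Δ := by
    intro x hx
    obtain ⟨E, hE, rfl⟩ := Finset.mem_image.1 hx
    exact hgΔ E hE
  obtain ⟨G0, hG0mem, hor⟩ := hforest (Γ.image g) hΓ'Δ (hne.image g)
  obtain ⟨E0, hE0Γ, hgE0⟩ := Finset.mem_image.1 hG0mem
  refine ⟨E0, hE0Γ, ?_⟩
  rcases hor with hsingle | ⟨G', hG'mem, hG'ne, hsub⟩
  · left
    rw [Finset.eq_singleton_iff_unique_mem]
    refine ⟨hE0Γ, fun D hD => ?_⟩
    have : g D ∈ Γ.image g := Finset.mem_image_of_mem g hD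
    rw [hsingle, Finset.mem_singleton] at this
    exact hinj D hD E0 hE0Γ (this.trans hgE0.symm)
  · right
    obtain ⟨E1, hE1Γ, hgE1⟩ := Finset.mem_image.1 hG'mem
    refine ⟨E1, hE1Γ, fun heq => hG'ne (by rw [← hgE1, ← hgE0, heq]), ?_⟩
    intro D hD hDne
    have hgDmem : g D ∈ Γ.image g := Finset.mem_image_of_mem g hD
    have hgDne : g D ≠ G0 := fun hh => hDne (hinj D hD E0 hE0Γ (hh.trans hgE0.symm))
    have hss : g E0 ∩ g D ⊆ g E0 ∩ g E1 := by
      rw [hgE0, hgE1]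
      exact hsub (g D) hgDmem hgDne
    rw [hgE E0 hE0Γ, hgE D hD, hgE E1 hE1Γ]
    intro x hx
    simp only [Finset.mem_inter, Finset.mem_sdiff] at hx ⊢
    have hm := hss (Finset.mem_inter.2 ⟨hx.1.1, hx.2.1⟩)
    rw [Finset.mem_inter] at hm
    exact ⟨⟨hm.1, hx.1.2⟩, hm.2, hx.1.2⟩
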